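/- Suppose l and l̃ are related by the Bäcklund transformation l = l̃ + ∑_{i=1}^N f_i E (E−1)^{-1} f_i^*, where f_i E(E−1)^{-1} f_i^* denotes the operator g ↦ f_i · E (E−1)^{-1}(f_i^* g). If the variation of l at fixed l̃ is induced by variations δf_i, δf_i^*, then the pairing identity (X, δl) = ∑_i ( ⟨X_+^* f_i^*, δf_i⟩ + ⟨X_+ f_i, δf_i^*⟩ ) holds for every operator X in the Lie algebra of shift operators, where X_+ is the projection onto nonnegative powers of E. -/

import Mathlib

noncomputable section

/-- A shift operator `X = ∑_j a_j E^j` encoded by its coefficient sequences. -/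
abbrev OpS := ℤ → ℤ → ℂ

/-- Product of shift operators via `E^j ∘ M_a = M_{E^j a} ∘ E^j`. -/
def opMulS (A B : OpS) : OpS := fun m n => ∑' j : ℤ, A j n * B (m - j) (n + j)

/-- Rapidly decreasing sequence (Schwartz class on `ℤ`). -/
def RapidDecay (a : ℤ → ℂ) : Prop :=
  ∀ k : ℕ, Summable fun n : ℤ => ‖a n‖ * (|n| : ℝ) ^ k

/-- Finitely many terms `a_j E^j`. -/
def FinOrders (A : OpS) : Prop := {j : ℤ | A j ≠ 0}.Finite

/-- The trace pairing `(A,B) = Tr (AB)`, `Tr A = ∑_n a_0(n)`. -/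
def pairOp (A B : OpS) : ℂ := ∑' n : ℤ, opMulS A B 0 n

/-- `X₊`: projection onto nonnegative powers of `E`. -/
def opPlus (X : OpS) : OpS := fun j n => if 0 ≤ j then X j n else 0

/-- Action of a shift operator on a sequence: `(X g)(n) = ∑_j X_j(n) g(n+j)`. -/
def opApply (X : OpS) (g : ℤ → ℂ) : ℤ → ℂ := fun n => ∑' j : ℤ, X j n * g (n + j)

/-- Action of the formal adjoint `X^* = ∑_j E^{-j} X_j`. -/
def opAdjApply (X : OpS) (h : ℤ → ℂ) : ℤ → ℂ :=
  fun n => ∑' j : ℤ, X j (n - j) * h (n - j)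

/-- The bilinear pairing `⟨u,v⟩ = ∑_n u(n) v(n)` on sequences. -/
def seqPair (u v : ℤ → ℂ) : ℂ := ∑' n : ℤ, u n * v n

/-- The operator `u E (E-1)⁻¹ v = ∑_{j ≤ 0} u · (E^j v) · E^j` appearing in the
Bäcklund transformation `l = l̃ + ∑_i f_i E (E-1)⁻¹ f_i^*`. -/
def btOp (u v : ℤ → ℂ) : OpS := fun j n => if j ≤ 0 then u n * v (n + j) else 0

lemma rd_norm_summable {u : ℤ → ℂ} (hu : RapidDecay u) : Summable fun n => ‖u n‖ := by
  have := hu 0; simpa using this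

lemma rd_bound {u : ℤ → ℂ} (hu : RapidDecay u) : ∀ n, ‖u n‖ ≤ ∑' n, ‖u n‖ :=
  fun n => Summable.le_tsum (rd_norm_summable hu) n (fun _ _ => norm_nonneg _)

lemma summable3 {X : OpS} (hXr : ∀ j, RapidDecay (X j)) (j : ℤ)
    {u v : ℤ → ℂ} (hu : RapidDecay u) (hv : RapidDecay v) :
    Summable fun n => X j n * u (n + j) * v n := by
  apply Summable.of_norm_bounded (g := fun n => ‖X j n‖ * ((∑' n, ‖u n‖) * (∑' n, ‖v n‖)))
    ((rd_norm_summable (hXr j)).mul_right _)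
  intro n
  rw [norm_mul, norm_mul, mul_assoc]
  have h3 : (0:ℝ) ≤ ∑' n, ‖u n‖ := tsum_nonneg fun _ => norm_nonneg _
  gcongr
  · exact rd_bound hu (n + j)
  · exact rd_bound hv n

section Main
variable {X : OpS} {S : Finset ℤ} (hS : ∀ j ∉ S, X j = 0) (hXr : ∀ j, RapidDecay (X j))

/-- The summand of the btOp pairing, as a function of (j, n). -/
def term (X : OpS) (u v : ℤ → ℂ) (j n : ℤ) : ℂ :=
  if 0 ≤ j then X j n * u (n + j) * v n else 0

include hXr in
lemma term_summable {u v : ℤ → ℂ} (hu : RapidDecay u) (hv : RapidDecay v) (j : ℤ) :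
    Summable (term X u v j) := by
  unfold term
  split_ifs with h
  · exact summable3 hXr j hu hv
  · exact summable_zero

include hS in
lemma opMulS_bt (u v : ℤ → ℂ) (n : ℤ) :
    opMulS X (btOp u v) 0 n = ∑ j ∈ S, term X u v j n := by
  unfold opMulS
  rw [tsum_eq_sum (s := S) (fun j hj => by rw [hS j hj]; simp)]
  refine Finset.sum_congr rfl fun j _ => ?_
  unfold btOp term
  by_cases h : 0 ≤ j
  · rw [if_pos (by omega : (0:ℤ) - j ≤ 0), if_pos h,
      show n + j + (0 - j) = n from by ring]
    ring
  · rw [if_neg (by omega : ¬((0:ℤ) - j ≤ 0)), if_neg h, mul_zero]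

include hS hXr in
lemma pair_bt {u v : ℤ → ℂ} (hu : RapidDecay u) (hv : RapidDecay v) :
    pairOp X (btOp u v) = ∑ j ∈ S, ∑' n, term X u v j n := by
  unfold pairOp
  rw [tsum_congr (opMulS_bt hS u v)]
  exact Summable.tsum_finsetSum fun j _ => term_summable hXr hu hv j

include hS hXr in
lemma summable_opMulS_bt {u v : ℤ → ℂ} (hu : RapidDecay u) (hv : RapidDecay v) :
    Summable (fun n => opMulS X (btOp u v) 0 n) := by
  rw [show (fun n => opMulS X (btOp u v) 0 n) = fun n => ∑ j ∈ S, term X u v j n from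
    funext (opMulS_bt hS u v)]
  exact summable_sum fun j _ => term_summable hXr hu hv j

include hS hXr in
lemma seq_apply {u v : ℤ → ℂ} (hu : RapidDecay u) (hv : RapidDecay v) :
    seqPair (opApply (opPlus X) u) v = ∑ j ∈ S, ∑' n, term X u v j n := by
  unfold seqPair opApply
  have key : ∀ n : ℤ, (∑' j : ℤ, opPlus X j n * u (n + j)) * v n
      = ∑ j ∈ S, term X u v j n := by
    intro n
    rw [tsum_eq_sum (s := S) (fun j hj => by unfold opPlus; rw [hS j hj]; simp),
      Finset.sum_mul]
    refine Finset.sum_congr rfl fun j _ => ?_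
    unfold opPlus term
    split_ifs with h <;> simp [mul_assoc]
  rw [tsum_congr key]
  exact Summable.tsum_finsetSum fun j _ => term_summable hXr hu hv j

include hS hXr in
lemma seq_adj {u v : ℤ → ℂ} (hu : RapidDecay u) (hv : RapidDecay v) :
    seqPair (opAdjApply (opPlus X) v) u = ∑ j ∈ S, ∑' n, term X u v j n := by
  unfold seqPair opAdjApply
  have key : ∀ n : ℤ, (∑' j : ℤ, opPlus X j (n - j) * v (n - j)) * u n
      = ∑ j ∈ S, (if 0 ≤ j then X j (n - j) * u n * v (n - j) else 0) := by
    intro n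
    rw [tsum_eq_sum (s := S) (fun j hj => by unfold opPlus; rw [hS j hj]; simp),
      Finset.sum_mul]
    refine Finset.sum_congr rfl fun j _ => ?_
    unfold opPlus
    split_ifs with h <;> [ring; simp]
  rw [tsum_congr key]
  rw [Summable.tsum_finsetSum (f := fun j n => if 0 ≤ j then X j (n - j) * u n * v (n - j) else 0)]
  · refine Finset.sum_congr rfl fun j _ => ?_
    rw [← Equiv.tsum_eq (Equiv.addRight j)
       (fun n => if 0 ≤ j then X j (n - j) * u n * v (n - j) else 0)]
    refine tsum_congr fun n => ?_
    simp only [Equiv.coe_addRight, add_sub_cancel_right]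
    unfold term
    split_ifs with h
    · ring
    · rfl
  · intro j _
    split_ifs with h
    · have := (summable3 hXr j hu hv).comp_injective (Equiv.subRight j).injective
      refine this.congr fun n => ?_
      show X j (n - j) * u (n - j + j) * v (n - j)
        = X j (n - j) * u n * v (n - j)
      rw [show n - j + j = n from by ring]
    · exact summable_zero

end Main

/-- For the variation `δl = ∑_i ((δf_i) E(E-1)⁻¹ f_i^* + f_i E(E-1)⁻¹ δf_i^*)`
of the Bäcklund transformation at fixed `l̃`, one has for every shift operator `X`:
`(X, δl) = ∑_i (⟨X₊^* f_i^*, δf_i⟩ + ⟨X₊ f_i, δf_i^*⟩)`. -/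
theorem backlund_variation_pairing (N : ℕ) (X : OpS)
    (hX : FinOrders X) (hXr : ∀ j, RapidDecay (X j))
    (f fs df dfs : Fin N → ℤ → ℂ)
    (hf : ∀ i, RapidDecay (f i)) (hfs : ∀ i, RapidDecay (fs i))
    (hdf : ∀ i, RapidDecay (df i)) (hdfs : ∀ i, RapidDecay (dfs i)) :
    pairOp X (∑ i, (btOp (df i) (fs i) + btOp (f i) (dfs i)))
      = ∑ i, (seqPair (opAdjApply (opPlus X) (fs i)) (df i)
              + seqPair (opApply (opPlus X) (f i)) (dfs i)) := by
  set S := hX.toFinset with hSdef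
  have hS : ∀ j ∉ S, X j = 0 := by
    intro j hj
    by_contra h
    exact hj (hX.mem_toFinset.mpr h)
  -- Step 1: opMulS distributes over the sum of btOps.
  have step1 : ∀ n, opMulS X (∑ i, (btOp (df i) (fs i) + btOp (f i) (dfs i))) 0 n
      = ∑ i, (opMulS X (btOp (df i) (fs i)) 0 n + opMulS X (btOp (f i) (dfs i)) 0 n) := by
    intro n
    unfold opMulS
    rw [tsum_eq_sum (s := S) (fun j hj => by rw [hS j hj]; simp)]
    simp only [Finset.sum_apply, Pi.add_apply, Finset.mul_sum, mul_add]
    rw [Finset.sum_comm]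
    refine Finset.sum_congr rfl fun i _ => ?_
    rw [Finset.sum_add_distrib]
    congr 1 <;>
      rw [tsum_eq_sum (s := S) (fun j hj => by rw [hS j hj]; simp)]
  unfold pairOp
  rw [tsum_congr step1,
    Summable.tsum_finsetSum (f := fun i n => opMulS X (btOp (df i) (fs i)) 0 n
      + opMulS X (btOp (f i) (dfs i)) 0 n)
      (fun i _ => (summable_opMulS_bt hS hXr (hdf i) (hfs i)).add
        (summable_opMulS_bt hS hXr (hf i) (hdfs i)))]
  refine Finset.sum_congr rfl fun i _ => ?_
  rw [Summable.tsum_add (summable_opMulS_bt hS hXr (hdf i) (hfs i))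
    (summable_opMulS_bt hS hXr (hf i) (hdfs i))]
  have e1 : (∑' n, opMulS X (btOp (df i) (fs i)) 0 n) = pairOp X (btOp (df i) (fs i)) := rfl
  have e2 : (∑' n, opMulS X (btOp (f i) (dfs i)) 0 n) = pairOp X (btOp (f i) (dfs i)) := rfl
  rw [e1, e2, pair_bt hS hXr (hdf i) (hfs i), pair_bt hS hXr (hf i) (hdfs i),
    seq_adj hS hXr (hdf i) (hfs i), seq_apply hS hXr (hf i) (hdfs i)]
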